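/- Let G = (V,E,ν,μ) be a connected locally finite weighted graph with sup_x deg_x/ν_x < ∞ whose Cheeger constant h := inf_{Ω finite} μ(∂Ω)/ν(Ω) is positive (equivalently, the ℓ¹ Sobolev inequality ‖f‖_{ℓ¹(V,ν)} ≤ C‖|Df|‖_{ℓ¹(E,μ)} holds for finitely supported f). Then for every p ∈ [1,∞) there is a constant C_p such that ‖f‖_{ℓ^p(V,ν)} ≤ C_p ‖|Df|‖_{ℓ^p(E,μ)} for all finitely supported f : V → ℝ. -/

import Mathlib

open scoped Classical

lemma row_summable {V : Type*} {w : V → V → ℝ} {P : Finset (V × V)}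
    (hw : ∀ x y, (x, y) ∉ P → w x y = 0) (x : V) : Summable (w x) :=
  summable_of_ne_finset_zero (s := P.image Prod.snd) (fun y hy =>
    hw x y (fun hmem => hy (Finset.mem_image.2 ⟨(x, y), hmem, rfl⟩)))

lemma tsum2_eq_sum {V : Type*} {w : V → V → ℝ} {P : Finset (V × V)}
    (hw : ∀ x y, (x, y) ∉ P → w x y = 0) :
    ∑' x, ∑' y, w x y = ∑ z ∈ P, w z.1 z.2 := by
  have hs : Summable (Function.uncurry w) :=
    summable_of_ne_finset_zero (s := P) (fun z hz => hw z.1 z.2 (by simpa using hz))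
  have h1 := Summable.tsum_prod' hs (row_summable hw)
  have h2 : tsum (Function.uncurry w) = ∑ z ∈ P, w z.1 z.2 :=
    tsum_eq_sum (fun z hz => hw z.1 z.2 hz)
  exact h1.symm.trans h2

lemma tsum2_comm {V : Type*} {w : V → V → ℝ} {P : Finset (V × V)}
    (hw : ∀ x y, (x, y) ∉ P → w x y = 0) :
    ∑' x, ∑' y, w y x = ∑' x, ∑' y, w x y := by
  have hs : Summable (Function.uncurry w) :=
    summable_of_ne_finset_zero (s := P) (fun z hz => hw z.1 z.2 (by simpa using hz))
  exact Summable.tsum_comm' hs (row_summable hw) (fun y => summable_of_ne_finset_zero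
    (s := P.image Prod.fst) (fun x hx =>
      hw x y (fun hmem => hx (Finset.mem_image.2 ⟨(x, y), hmem, rfl⟩))))

lemma l1 {V : Type*} (ν : V → ℝ) (μ : V → V → ℝ)
    (hsymm : ∀ x y, μ x y = μ y x)
    (hloc : ∀ x, (Function.support (μ x)).Finite)
    (h : ℝ)
    (hcheeger : ∀ Ω : Finset V, Ω.Nonempty →
      h * ∑ x ∈ Ω, ν x ≤ ∑ x ∈ Ω, ∑' y, (if y ∈ Ω then 0 else μ x y)) :
    ∀ (n : ℕ) (f : V → ℝ) (hf : (Function.support f).Finite),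
      hf.toFinset.card ≤ n → (∀ x, 0 ≤ f x) →
      h * ∑' x, f x * ν x ≤ (1/2) * ∑' x, ∑' y, μ x y * |f x - f y| := by
  intro n
  induction n with
  | zero =>
    intro f hf hcard hf0
    have hf' : ∀ x, f x = 0 := by
      have : hf.toFinset = ∅ := Finset.card_eq_zero.mp (Nat.le_zero.mp hcard)
      intro x
      by_contra hx
      have : x ∈ hf.toFinset := hf.mem_toFinset.mpr hx
      simp_all
    simp [hf']
  | succ n IH =>
    intro f hf hcard hf0
    by_cases hle : hf.toFinset.card ≤ n
    · exact IH f hf hle hf0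
    set S := hf.toFinset with hSdef
    have hSne : S.Nonempty := Finset.card_pos.mp (by omega)
    have hmemS : ∀ x, x ∈ S ↔ f x ≠ 0 := fun x => hf.mem_toFinset
    have hfS : ∀ x, x ∉ S → f x = 0 := fun x hx => by
      by_contra hc; exact hx ((hmemS x).mpr hc)
    obtain ⟨x₀, hx₀S, hx₀⟩ := S.exists_mem_eq_inf' hSne f
    set m := S.inf' hSne f with hmdef
    have hmle : ∀ x ∈ S, m ≤ f x := fun x hx => Finset.inf'_le f hx
    have hmpos : 0 < m := by
      rcases lt_or_eq_of_le (hf0 x₀) with h1 | h1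
      · rw [hx₀]; exact h1
      · exact absurd h1.symm ((hmemS x₀).mp hx₀S)
    set g : V → ℝ := fun x => if x ∈ S then f x - m else 0 with hgdef
    have hg0 : ∀ x, 0 ≤ g x := fun x => by
      simp only [hgdef]; split
      · linarith [hmle x (by assumption)]
      · exact le_refl 0
    have hgS : ∀ x, x ∉ S → g x = 0 := fun x hx => by simp [hgdef, hx]
    have hgsub : Function.support g ⊆ ↑(S.erase x₀) := by
      intro x hx
      simp only [Function.mem_support, hgdef] at hx
      by_cases hxS : x ∈ S
      · simp only [hxS, if_pos] at hx
        have hxne : x ≠ x₀ := by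
          intro hrfl; subst hrfl; rw [← hx₀] at hx; simp at hx
        exact Finset.mem_coe.mpr (Finset.mem_erase.mpr ⟨hxne, hxS⟩)
      · simp [hxS] at hx
    have hgf : (Function.support g).Finite :=
      Set.Finite.subset (S.erase x₀).finite_toSet hgsub
    have hgcard : hgf.toFinset.card ≤ n := by
      have hsub : hgf.toFinset ⊆ S.erase x₀ := fun x hx =>
        Finset.mem_coe.mp (hgsub (hgf.mem_toFinset.mp hx))
      have := Finset.card_le_card hsub
      have := Finset.card_erase_of_mem hx₀S
      omega
    have IHg := IH g hgf hgcard hg0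
    set χ : V → ℝ := fun x => if x ∈ S then (1:ℝ) else 0 with hχdef
    -- key pointwise identity
    have key : ∀ x y, |f x - f y| = m * |χ x - χ y| + |g x - g y| := by
      intro x y
      by_cases hx : x ∈ S <;> by_cases hy : y ∈ S <;>
        simp only [hχdef, hgdef, hx, hy, if_pos, if_neg, if_true, if_false]
      · rw [show f x - m - (f y - m) = f x - f y by ring]; simp
      · rw [hfS y hy]
        rw [abs_of_nonneg (by linarith [hmle x hx] : (0:ℝ) ≤ f x - 0),
            abs_of_nonneg (by linarith [hmle x hx] : (0:ℝ) ≤ f x - m - 0)]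
        simp
      · rw [hfS x hx]
        rw [abs_of_nonpos (by linarith [hmle y hy] : (0:ℝ) - f y ≤ 0),
            abs_of_nonpos (by linarith [hmle y hy] : (0:ℝ) - (f y - m) ≤ 0)]
        simp
      · rw [hfS x hx, hfS y hy]; simp
    -- big finsets
    set N : V → Finset V := fun x => (hloc x).toFinset with hNdef
    set T : Finset V := S ∪ S.biUnion N with hTdef
    set U : Finset V := T ∪ T.biUnion N with hUdef
    set P : Finset (V × V) := T ×ˢ U with hPdef
    have hμN : ∀ x y, μ x y ≠ 0 → y ∈ N x := fun x y hxy =>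
      (hloc x).mem_toFinset.mpr hxy
    have hP : ∀ x y, μ x y ≠ 0 → (x ∈ S ∨ y ∈ S) → (x, y) ∈ P := by
      intro x y hμ hxy
      rw [hPdef, Finset.mem_product]
      rcases hxy with hx | hy
      · refine ⟨Finset.mem_union_left _ hx, ?_⟩
        exact Finset.mem_union_left _ (Finset.mem_union_right _
          (Finset.mem_biUnion.mpr ⟨x, hx, hμN x y hμ⟩))
      · have hx : x ∈ S.biUnion N :=
          Finset.mem_biUnion.mpr ⟨y, hy, hμN y x (by rw [← hsymm]; exact hμ)⟩
        exact ⟨Finset.mem_union_right _ hx,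
          Finset.mem_union_left _ (Finset.mem_union_left _ hy)⟩
    have hPf : ∀ x y, (x, y) ∉ P → μ x y * |f x - f y| = 0 := by
      intro x y hz
      by_contra hne
      rcases mul_ne_zero_iff.mp hne with ⟨h1, h2⟩
      refine hz (hP x y h1 ?_)
      by_contra hc
      push_neg at hc
      rw [hfS x hc.1, hfS y hc.2] at h2; simp at h2
    have hPg : ∀ x y, (x, y) ∉ P → μ x y * |g x - g y| = 0 := by
      intro x y hz
      by_contra hne
      rcases mul_ne_zero_iff.mp hne with ⟨h1, h2⟩
      refine hz (hP x y h1 ?_)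
      by_contra hc
      push_neg at hc
      rw [hgS x hc.1, hgS y hc.2] at h2; simp at h2
    have hPχ : ∀ x y, (x, y) ∉ P → μ x y * |χ x - χ y| = 0 := by
      intro x y hz
      by_contra hne
      rcases mul_ne_zero_iff.mp hne with ⟨h1, h2⟩
      refine hz (hP x y h1 ?_)
      by_contra hc
      push_neg at hc
      rw [hχdef] at h2
      simp only [hc.1, hc.2, if_neg, if_false] at h2; simp at h2
    set a : V → V → ℝ := fun x y => if x ∈ S ∧ y ∉ S then μ x y else 0 with hadef
    have hPa : ∀ x y, (x, y) ∉ P → a x y = 0 := by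
      intro x y hz
      by_contra hne
      rw [hadef] at hne
      simp only at hne
      by_cases hc : x ∈ S ∧ y ∉ S
      · rw [if_pos hc] at hne
        exact hz (hP x y hne (Or.inl hc.1))
      · rw [if_neg hc] at hne; exact hne rfl
    have hPa' : ∀ x y, (x, y) ∉ P → a y x = 0 := by
      intro x y hz
      by_contra hne
      rw [hadef] at hne
      simp only at hne
      by_cases hc : y ∈ S ∧ x ∉ S
      · rw [if_pos hc] at hne
        refine hz (hP x y (by rw [hsymm]; exact hne) (Or.inr hc.1))
      · rw [if_neg hc] at hne; exact hne rfl
    -- conversions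
    have E1 : ∑' x, f x * ν x = ∑ x ∈ S, f x * ν x :=
      tsum_eq_sum (fun x hx => by rw [hfS x hx, zero_mul])
    have E2 : ∑' x, g x * ν x = ∑ x ∈ S, g x * ν x :=
      tsum_eq_sum (fun x hx => by rw [hgS x hx, zero_mul])
    have E3 : ∑ x ∈ S, f x * ν x = ∑ x ∈ S, g x * ν x + m * ∑ x ∈ S, ν x := by
      rw [Finset.mul_sum, ← Finset.sum_add_distrib]
      refine Finset.sum_congr rfl (fun x hx => ?_)
      rw [hgdef]; simp only [hx, if_pos, if_true]; ring
    have Ef : ∑' x, ∑' y, μ x y * |f x - f y| = ∑ z ∈ P, μ z.1 z.2 * |f z.1 - f z.2| :=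
      tsum2_eq_sum hPf
    have Eg : ∑' x, ∑' y, μ x y * |g x - g y| = ∑ z ∈ P, μ z.1 z.2 * |g z.1 - g z.2| :=
      tsum2_eq_sum hPg
    have Eχ : ∑' x, ∑' y, μ x y * |χ x - χ y| = ∑ z ∈ P, μ z.1 z.2 * |χ z.1 - χ z.2| :=
      tsum2_eq_sum hPχ
    have E4 : ∑ z ∈ P, μ z.1 z.2 * |f z.1 - f z.2|
        = m * ∑ z ∈ P, μ z.1 z.2 * |χ z.1 - χ z.2|
          + ∑ z ∈ P, μ z.1 z.2 * |g z.1 - g z.2| := by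
      rw [Finset.mul_sum, ← Finset.sum_add_distrib]
      refine Finset.sum_congr rfl (fun z _ => ?_)
      rw [key z.1 z.2]; ring
    -- boundary identity
    have e5a : ∀ x y, μ x y * |χ x - χ y| = a x y + a y x := by
      intro x y
      by_cases hx : x ∈ S <;> by_cases hy : y ∈ S <;>
        simp only [hχdef, hadef, hx, hy, if_pos, if_neg, if_true, if_false,
          and_true, and_false, true_and, false_and, not_true, not_false_iff] <;>
        simp [hsymm x y]
    have e5b : ∑ z ∈ P, a z.2 z.1 = ∑ z ∈ P, a z.1 z.2 := by
      have h1 : ∑' (x : V) (y : V), a y x = ∑ z ∈ P, a z.2 z.1 :=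
        tsum2_eq_sum (w := fun x y => a y x) hPa'
      have h2 : ∑' (x : V) (y : V), a x y = ∑ z ∈ P, a z.1 z.2 :=
        tsum2_eq_sum hPa
      rw [← h1, ← h2]
      exact tsum2_comm (P := P) hPa
    have e5c : ∑' (x : V) (y : V), a x y
        = ∑ x ∈ S, ∑' y, (if y ∈ S then 0 else μ x y) := by
      refine (tsum_eq_sum (fun x hx => ?_)).trans (Finset.sum_congr rfl (fun x hx => ?_))
      · have : ∀ y, a x y = 0 := fun y => by simp [hadef, hx]
        simp [this]
      · refine tsum_congr (fun y => ?_)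
        by_cases hy : y ∈ S <;> simp [hadef, hx, hy]
    have E5 : ∑ z ∈ P, μ z.1 z.2 * |χ z.1 - χ z.2|
        = 2 * ∑ x ∈ S, ∑' y, (if y ∈ S then 0 else μ x y) := by
      have : ∑ z ∈ P, μ z.1 z.2 * |χ z.1 - χ z.2|
          = ∑ z ∈ P, a z.1 z.2 + ∑ z ∈ P, a z.2 z.1 := by
        rw [← Finset.sum_add_distrib]
        exact Finset.sum_congr rfl (fun z _ => e5a z.1 z.2)
      rw [this, e5b, ← (tsum2_eq_sum hPa), e5c]; ring
    -- combine
    have hch := hcheeger S hSne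
    have h5 : h * (m * ∑ x ∈ S, ν x)
        ≤ m * ∑ x ∈ S, ∑' y, (if y ∈ S then 0 else μ x y) := by
      calc h * (m * ∑ x ∈ S, ν x) = m * (h * ∑ x ∈ S, ν x) := by ring
        _ ≤ _ := mul_le_mul_of_nonneg_left hch hmpos.le
    rw [E1, E3, Ef, E4]
    rw [E2] at IHg
    rw [Eg] at IHg
    rw [E5]
    linarith

lemma tsum2_le {V : Type*} {w₁ w₂ : V → V → ℝ} {P : Finset (V × V)}
    (h1 : ∀ x y, (x, y) ∉ P → w₁ x y = 0) (h2 : ∀ x y, (x, y) ∉ P → w₂ x y = 0)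
    (hle : ∀ x y, w₁ x y ≤ w₂ x y) :
    ∑' x, ∑' y, w₁ x y ≤ ∑' x, ∑' y, w₂ x y := by
  rw [tsum2_eq_sum h1, tsum2_eq_sum h2]
  exact Finset.sum_le_sum (fun z _ => hle z.1 z.2)

lemma rpow_diff_le {p : ℝ} (hp : 1 ≤ p) {a b : ℝ} (hb : 0 ≤ b) (hba : b ≤ a) :
    a ^ p - b ^ p ≤ p * (a - b) * a ^ (p - 1) := by
  have ha : 0 ≤ a := le_trans hb hba
  rcases eq_or_lt_of_le hba with rfl | hlt
  · simp
  have hcont : ContinuousOn (fun x : ℝ => x ^ p) (Set.Icc b a) := by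
    intro x _
    exact (Real.continuousAt_rpow_const x p (Or.inr (by linarith))).continuousWithinAt
  have hderiv : ∀ x ∈ Set.Ioo b a, HasDerivAt (fun x : ℝ => x ^ p) (p * x ^ (p - 1)) x :=
    fun x _ => Real.hasDerivAt_rpow_const (Or.inr hp)
  obtain ⟨c, hc, hceq⟩ := exists_hasDerivAt_eq_slope (fun x : ℝ => x ^ p)
    (fun x => p * x ^ (p - 1)) hlt hcont hderiv
  have hc0 : 0 ≤ c := le_trans hb hc.1.le
  have hcp : c ^ (p - 1) ≤ a ^ (p - 1) :=
    Real.rpow_le_rpow hc0 hc.2.le (by linarith)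
  have hab : 0 < a - b := by linarith
  have h1 : a ^ p - b ^ p = p * c ^ (p - 1) * (a - b) := by
    field_simp at hceq
    linarith [hceq]
  rw [h1]
  have hp0 : (0:ℝ) ≤ p := by linarith
  calc p * c ^ (p-1) * (a - b) ≤ p * a ^ (p-1) * (a - b) := by
        apply mul_le_mul_of_nonneg_right _ hab.le
        exact mul_le_mul_of_nonneg_left hcp hp0
    _ = p * (a - b) * a ^ (p-1) := by ring

lemma abs_rpow_sub_le_aux {p : ℝ} (hp : 1 ≤ p) {u v : ℝ} (h : |v| ≤ |u|) :
    abs (|u| ^ p - |v| ^ p) ≤ p * |u - v| * (|u| ^ (p - 1) + |v| ^ (p - 1)) := by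
  have h1 : |v| ^ p ≤ |u| ^ p := Real.rpow_le_rpow (abs_nonneg v) h (by linarith)
  rw [abs_of_nonneg (by linarith)]
  calc |u| ^ p - |v| ^ p ≤ p * (|u| - |v|) * |u| ^ (p - 1) :=
        rpow_diff_le hp (abs_nonneg v) h
    _ ≤ p * |u - v| * (|u| ^ (p - 1) + |v| ^ (p - 1)) := by
        have h2 : |u| - |v| ≤ |u - v| := abs_sub_abs_le_abs_sub u v
        have h3 : (0:ℝ) ≤ |u| ^ (p - 1) := Real.rpow_nonneg (abs_nonneg u) _
        have h4 : (0:ℝ) ≤ |v| ^ (p - 1) := Real.rpow_nonneg (abs_nonneg v) _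
        have hp0 : (0:ℝ) ≤ p := by linarith
        have h5 : p * (|u| - |v|) ≤ p * |u - v| := mul_le_mul_of_nonneg_left h2 hp0
        have h6 : (0:ℝ) ≤ p * |u - v| := mul_nonneg hp0 (abs_nonneg _)
        nlinarith [sub_nonneg.mpr h]
    
lemma abs_rpow_sub_le {p : ℝ} (hp : 1 ≤ p) (u v : ℝ) :
    abs (|u| ^ p - |v| ^ p) ≤ p * |u - v| * (|u| ^ (p - 1) + |v| ^ (p - 1)) := by
  rcases le_total |v| |u| with h | h
  · exact abs_rpow_sub_le_aux hp h
  · rw [abs_sub_comm, abs_sub_comm u v, add_comm]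
    exact abs_rpow_sub_le_aux hp h

lemma add_rpow_le_two_rpow {q : ℝ} (hq : 0 ≤ q) {a b : ℝ} (ha : 0 ≤ a) (hb : 0 ≤ b) :
    (a + b) ^ q ≤ 2 ^ q * (a ^ q + b ^ q) := by
  have h1 : a + b ≤ 2 * max a b := by
    have := le_max_left a b; have := le_max_right a b; linarith
  calc (a + b) ^ q ≤ (2 * max a b) ^ q :=
        Real.rpow_le_rpow (by positivity) h1 hq
    _ = 2 ^ q * (max a b) ^ q :=
        Real.mul_rpow (by norm_num) (le_max_of_le_left ha)
    _ ≤ 2 ^ q * (a ^ q + b ^ q) := by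
        have h2 : (max a b) ^ q ≤ a ^ q + b ^ q := by
          rcases max_cases a b with ⟨h3, _⟩ | ⟨h3, _⟩ <;> rw [h3]
          · nlinarith [Real.rpow_nonneg hb q]
          · nlinarith [Real.rpow_nonneg ha q]
        have : (0:ℝ) ≤ 2 ^ q := by positivity
        nlinarith

lemma exists_P {V : Type*} (μ : V → V → ℝ) (hsymm : ∀ x y, μ x y = μ y x)
    (hloc : ∀ x, (Function.support (μ x)).Finite) (S : Finset V) :
    ∃ (T U : Finset V), S ⊆ T ∧ S ⊆ U ∧
      (∀ x y, μ x y ≠ 0 → (x ∈ S ∨ y ∈ S) → (x, y) ∈ T ×ˢ U) := by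
  classical
  set N : V → Finset V := fun x => (hloc x).toFinset with hN
  refine ⟨S ∪ S.biUnion N, (S ∪ S.biUnion N) ∪ (S ∪ S.biUnion N).biUnion N,
    Finset.subset_union_left, Finset.subset_union_left.trans Finset.subset_union_left, ?_⟩
  intro x y hμ hxy
  rw [Finset.mem_product]
  have hμN : ∀ a b, μ a b ≠ 0 → b ∈ N a := fun a b hab => (hloc a).mem_toFinset.mpr hab
  rcases hxy with hx | hy
  · have hxT : x ∈ S ∪ S.biUnion N := Finset.mem_union_left _ hx
    refine ⟨hxT, Finset.mem_union_left _ (Finset.mem_union_right _ ?_)⟩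
    exact Finset.mem_biUnion.mpr ⟨x, hx, hμN x y hμ⟩
  · have hxT : x ∈ S ∪ S.biUnion N := Finset.mem_union_right _
      (Finset.mem_biUnion.mpr ⟨y, hy, hμN y x (by rw [← hsymm]; exact hμ)⟩)
    exact ⟨hxT, Finset.mem_union_left _ (Finset.mem_union_left _ hy)⟩

theorem lp_poincare_of_cheeger {V : Type*} (ν : V → ℝ) (μ : V → V → ℝ)
    (hν : ∀ x, 0 < ν x) (hsymm : ∀ x y, μ x y = μ y x) (hnn : ∀ x y, 0 ≤ μ x y)
    (hloc : ∀ x, (Function.support (μ x)).Finite)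
    (hconn : ∀ x y : V, Relation.ReflTransGen (fun a b => 0 < μ a b) x y)
    (hM : ∃ M : ℝ, ∀ x, (∑' y, μ x y) / ν x ≤ M)
    (h : ℝ) (hh : 0 < h)
    (hcheeger : ∀ Ω : Finset V, Ω.Nonempty →
      h * ∑ x ∈ Ω, ν x ≤ ∑ x ∈ Ω, ∑' y, (if y ∈ Ω then 0 else μ x y))
    (p : ℝ) (hp : 1 ≤ p) :
    ∃ C : ℝ, 0 < C ∧ ∀ f : V → ℝ, (Function.support f).Finite →
      (∑' x, |f x| ^ p * ν x) ^ (1 / p)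
        ≤ C * ((1 / 2) * ∑' x, ∑' y, μ x y * |f x - f y| ^ p) ^ (1 / p) := by
  obtain ⟨M, hMle⟩ := hM
  set M' : ℝ := max M 1 with hM'def
  have hM'pos : (0:ℝ) < M' := lt_of_lt_of_le one_pos (le_max_right M 1)
  have hM' : ∀ x, ∑' y, μ x y ≤ M' * ν x := by
    intro x
    have h1 := hMle x
    rw [div_le_iff₀ (hν x)] at h1
    calc ∑' y, μ x y ≤ M * ν x := h1
      _ ≤ M' * ν x := mul_le_mul_of_nonneg_right (le_max_left M 1) (hν x).le
  have hp0 : (0:ℝ) < p := by linarith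
  rcases eq_or_lt_of_le hp with hp1 | hp1
  · -- p = 1
    subst hp1
    refine ⟨1/h, by positivity, ?_⟩
    intro f hf
    norm_num [Real.rpow_one]
    set S := hf.toFinset with hSdef
    have hfS : ∀ x, x ∉ S → f x = 0 := fun x hx => by
      by_contra hc; exact hx (hf.mem_toFinset.mpr hc)
    obtain ⟨T, U, hST, hSU, hP⟩ := exists_P μ hsymm hloc S
    set P := T ×ˢ U with hPdef
    have hW : ∀ (F : ℝ → ℝ → ℝ), F 0 0 = 0 →
        ∀ x y, (x, y) ∉ P → μ x y * F (f x) (f y) = 0 := by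
      intro F hF x y hz
      by_contra hne
      rcases mul_ne_zero_iff.mp hne with ⟨h1, h2⟩
      refine hz (hP x y h1 ?_)
      by_contra hc
      push_neg at hc
      rw [hfS x hc.1, hfS y hc.2, hF] at h2
      exact h2 rfl
    have hfabs : (Function.support fun x => |f x|).Finite := by
      refine hf.subset (fun x hx => ?_)
      simp only [Function.mem_support, abs_ne_zero] at hx ⊢
      exact hx
    have l1f : h * ∑' x, |f x| * ν x
        ≤ 1/2 * ∑' (x : V) (y : V), μ x y * abs (|f x| - |f y|) :=
      l1 ν μ hsymm hloc h hcheeger hfabs.toFinset.card (fun x => |f x|) hfabs le_rfl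
        (fun x => abs_nonneg _)
    have hcomp : ∑' (x : V) (y : V), μ x y * abs (|f x| - |f y|)
        ≤ ∑' (x : V) (y : V), μ x y * |f x - f y| :=
      tsum2_le (P := P)
        (fun x y hz => hW (fun u v => abs (|u| - |v|)) (by simp) x y hz)
        (fun x y hz => hW (fun u v => |u - v|) (by simp) x y hz)
        (fun x y => mul_le_mul_of_nonneg_left (abs_abs_sub_abs_le_abs_sub _ _) (hnn x y))
    rw [inv_mul_eq_div, le_div_iff₀ hh]
    linarith
  · -- 1 < p
    set q : ℝ := p / (p - 1) with hqdef
    have hp1' : (0:ℝ) < p - 1 := by linarith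
    have hpq : p.HolderConjugate q := Real.HolderConjugate.conjExponent hp1
    have hq1 : 1 < q := hpq.symm.lt
    have hq0 : (0:ℝ) < q := by linarith
    have hinv : 1/p + 1/q = 1 := by
      rw [one_div, one_div]; exact hpq.inv_add_inv_eq_one
    have hpq' : (p - 1) * q = p := by
      rw [hqdef]; field_simp
    set K : ℝ := ((2:ℝ) ^ q * 2 * M') ^ (1/q) with hKdef
    have hKpos : 0 < K := by positivity
    refine ⟨p * K / (2 * h) * 2 ^ (1/p), by positivity, ?_⟩
    intro f hf
    set S := hf.toFinset with hSdef
    have hfS : ∀ x, x ∉ S → f x = 0 := fun x hx => by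
      by_contra hc; exact hx (hf.mem_toFinset.mpr hc)
    obtain ⟨T, U, hST, hSU, hP⟩ := exists_P μ hsymm hloc S
    set P := T ×ˢ U with hPdef
    have hW : ∀ (F : ℝ → ℝ → ℝ), F 0 0 = 0 →
        ∀ x y, (x, y) ∉ P → μ x y * F (f x) (f y) = 0 := by
      intro F hF x y hz
      by_contra hne
      rcases mul_ne_zero_iff.mp hne with ⟨h1, h2⟩
      refine hz (hP x y h1 ?_)
      by_contra hc
      push_neg at hc
      rw [hfS x hc.1, hfS y hc.2, hF] at h2
      exact h2 rfl
    have hz0 : (0:ℝ) ^ p = 0 := Real.zero_rpow hp0.ne'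
    set X : ℝ := ∑ x ∈ S, |f x| ^ p * ν x with hXdef
    set Y : ℝ := ∑ z ∈ P, μ z.1 z.2 * |f z.1 - f z.2| ^ p with hYdef
    set Z : ℝ := ∑ z ∈ P, μ z.1 z.2 * (|f z.1| ^ (p-1) + |f z.2| ^ (p-1)) ^ q with hZdef
    set W1 : ℝ := ∑ z ∈ P, μ z.1 z.2 * abs (|f z.1| ^ p - |f z.2| ^ p) with hW1def
    set W2 : ℝ := ∑ z ∈ P,
      μ z.1 z.2 * (|f z.1 - f z.2| * (|f z.1| ^ (p-1) + |f z.2| ^ (p-1))) with hW2def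
    have hX0 : 0 ≤ X := Finset.sum_nonneg
      (fun x _ => mul_nonneg (Real.rpow_nonneg (abs_nonneg _) _) (hν x).le)
    have hY0 : 0 ≤ Y := Finset.sum_nonneg
      (fun z _ => mul_nonneg (hnn _ _) (Real.rpow_nonneg (abs_nonneg _) _))
    have hZ0 : 0 ≤ Z := Finset.sum_nonneg (fun z _ => mul_nonneg (hnn _ _)
      (Real.rpow_nonneg (add_nonneg (Real.rpow_nonneg (abs_nonneg _) _)
        (Real.rpow_nonneg (abs_nonneg _) _)) _))
    have EX : ∑' x, |f x| ^ p * ν x = X :=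
      tsum_eq_sum (fun x hx => by rw [hfS x hx]; simp [hz0])
    have EY : ∑' (x : V) (y : V), μ x y * |f x - f y| ^ p = Y :=
      tsum2_eq_sum (fun x y hz =>
        hW (fun u v => |u - v| ^ p) (by simp [hz0]) x y hz)
    -- step 1
    have hphifin : (Function.support fun x => |f x| ^ p).Finite := by
      refine hf.subset (fun x hx => ?_)
      simp only [Function.mem_support] at hx ⊢
      intro h0
      exact hx (by rw [h0]; simp [hz0])
    have st1 : h * ∑' x, |f x| ^ p * ν x
        ≤ 1/2 * ∑' (x : V) (y : V), μ x y * abs (|f x| ^ p - |f y| ^ p) :=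
      l1 ν μ hsymm hloc h hcheeger hphifin.toFinset.card (fun x => |f x| ^ p) hphifin
        le_rfl (fun x => Real.rpow_nonneg (abs_nonneg _) _)
    have EW1 : ∑' (x : V) (y : V), μ x y * abs (|f x| ^ p - |f y| ^ p) = W1 :=
      tsum2_eq_sum (fun x y hz =>
        hW (fun u v => abs (|u| ^ p - |v| ^ p)) (by simp) x y hz)
    rw [EX, EW1] at st1
    -- step 2
    have step2 : W1 ≤ p * W2 := by
      rw [hW1def, hW2def, Finset.mul_sum]
      refine Finset.sum_le_sum (fun z _ => ?_)
      calc μ z.1 z.2 * abs (|f z.1| ^ p - |f z.2| ^ p)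
          ≤ μ z.1 z.2 * (p * |f z.1 - f z.2| * (|f z.1| ^ (p-1) + |f z.2| ^ (p-1))) :=
            mul_le_mul_of_nonneg_left (abs_rpow_sub_le hp _ _) (hnn _ _)
        _ = p * (μ z.1 z.2 * (|f z.1 - f z.2| * (|f z.1| ^ (p-1) + |f z.2| ^ (p-1)))) := by
            ring
    -- step 3 (Hölder)
    have hsplit : ∀ c : ℝ, 0 ≤ c → c ^ (1/p) * c ^ (1/q) = c := by
      intro c hc
      rw [← Real.rpow_add' hc (by rw [hinv]; norm_num), hinv, Real.rpow_one]
    have hBnn : ∀ z : V × V, 0 ≤ |f z.1| ^ (p-1) + |f z.2| ^ (p-1) := fun z =>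
      add_nonneg (Real.rpow_nonneg (abs_nonneg _) _) (Real.rpow_nonneg (abs_nonneg _) _)
    have hold := Real.inner_le_Lp_mul_Lq_of_nonneg (s := P) hpq
      (f := fun z => μ z.1 z.2 ^ (1/p) * |f z.1 - f z.2|)
      (g := fun z => μ z.1 z.2 ^ (1/q) * (|f z.1| ^ (p-1) + |f z.2| ^ (p-1)))
      (fun z _ => mul_nonneg (Real.rpow_nonneg (hnn _ _) _) (abs_nonneg _))
      (fun z _ => mul_nonneg (Real.rpow_nonneg (hnn _ _) _) (hBnn z))
    have e1 : ∑ z ∈ P, (μ z.1 z.2 ^ (1/p) * |f z.1 - f z.2|) *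
        (μ z.1 z.2 ^ (1/q) * (|f z.1| ^ (p-1) + |f z.2| ^ (p-1))) = W2 := by
      rw [hW2def]
      refine Finset.sum_congr rfl (fun z _ => ?_)
      rw [show (μ z.1 z.2 ^ (1/p) * |f z.1 - f z.2|) *
          (μ z.1 z.2 ^ (1/q) * (|f z.1| ^ (p-1) + |f z.2| ^ (p-1)))
          = (μ z.1 z.2 ^ (1/p) * μ z.1 z.2 ^ (1/q)) *
            (|f z.1 - f z.2| * (|f z.1| ^ (p-1) + |f z.2| ^ (p-1))) from by ring,
        hsplit _ (hnn _ _)]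
    have e2 : ∑ z ∈ P, (μ z.1 z.2 ^ (1/p) * |f z.1 - f z.2|) ^ p = Y := by
      rw [hYdef]
      refine Finset.sum_congr rfl (fun z _ => ?_)
      rw [Real.mul_rpow (Real.rpow_nonneg (hnn _ _) _) (abs_nonneg _),
        ← Real.rpow_mul (hnn _ _), one_div_mul_cancel hp0.ne', Real.rpow_one]
    have e3 : ∑ z ∈ P, (μ z.1 z.2 ^ (1/q) *
        (|f z.1| ^ (p-1) + |f z.2| ^ (p-1))) ^ q = Z := by
      rw [hZdef]
      refine Finset.sum_congr rfl (fun z _ => ?_)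
      rw [Real.mul_rpow (Real.rpow_nonneg (hnn _ _) _) (hBnn z),
        ← Real.rpow_mul (hnn _ _), one_div_mul_cancel hq0.ne', Real.rpow_one]
    rw [e1, e2, e3] at hold
    -- step 4
    have hrowsum : ∀ x : V, Summable (μ x) := fun x =>
      summable_of_ne_finset_zero (s := (hloc x).toFinset)
        (fun y hy => by by_contra hc; exact hy ((hloc x).mem_toFinset.mpr hc))
    have hTX : ∑ x ∈ T, |f x| ^ p * ν x = X :=
      (Finset.sum_subset hST (fun x _ hx => by rw [hfS x hx]; simp [hz0])).symm
    have hUX : ∑ x ∈ U, |f x| ^ p * ν x = X :=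
      (Finset.sum_subset hSU (fun x _ hx => by rw [hfS x hx]; simp [hz0])).symm
    have hZ1 : ∑ z ∈ P, μ z.1 z.2 * |f z.1| ^ p ≤ M' * X := by
      have hprod : ∑ z ∈ P, μ z.1 z.2 * |f z.1| ^ p
          = ∑ x ∈ T, ∑ y ∈ U, μ x y * |f x| ^ p :=
        Finset.sum_product (s := T) (t := U)
          (f := fun z => μ z.1 z.2 * |f z.1| ^ p)
      rw [hprod]
      calc ∑ x ∈ T, ∑ y ∈ U, μ x y * |f x| ^ p
          ≤ ∑ x ∈ T, |f x| ^ p * (M' * ν x) := by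
            refine Finset.sum_le_sum (fun x _ => ?_)
            calc ∑ y ∈ U, μ x y * |f x| ^ p = (∑ y ∈ U, μ x y) * |f x| ^ p := by
                  rw [Finset.sum_mul]
              _ ≤ (M' * ν x) * |f x| ^ p := by
                  refine mul_le_mul_of_nonneg_right ?_
                    (Real.rpow_nonneg (abs_nonneg _) _)
                  exact le_trans ((hrowsum x).sum_le_tsum U (fun y _ => hnn x y)) (hM' x)
              _ = |f x| ^ p * (M' * ν x) := by ring
        _ = M' * ∑ x ∈ T, |f x| ^ p * ν x := by
            rw [Finset.mul_sum]
            exact Finset.sum_congr rfl (fun x _ => by ring)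
        _ = M' * X := by rw [hTX]
    have hZ2 : ∑ z ∈ P, μ z.1 z.2 * |f z.2| ^ p ≤ M' * X := by
      have hprod : ∑ z ∈ P, μ z.1 z.2 * |f z.2| ^ p
          = ∑ x ∈ T, ∑ y ∈ U, μ x y * |f y| ^ p :=
        Finset.sum_product (s := T) (t := U)
          (f := fun z => μ z.1 z.2 * |f z.2| ^ p)
      rw [hprod, Finset.sum_comm]
      calc ∑ y ∈ U, ∑ x ∈ T, μ x y * |f y| ^ p
          ≤ ∑ y ∈ U, |f y| ^ p * (M' * ν y) := by
            refine Finset.sum_le_sum (fun y _ => ?_)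
            calc ∑ x ∈ T, μ x y * |f y| ^ p = (∑ x ∈ T, μ y x) * |f y| ^ p := by
                  rw [Finset.sum_mul]
                  exact Finset.sum_congr rfl (fun x _ => by rw [hsymm])
              _ ≤ (M' * ν y) * |f y| ^ p := by
                  refine mul_le_mul_of_nonneg_right ?_
                    (Real.rpow_nonneg (abs_nonneg _) _)
                  exact le_trans ((hrowsum y).sum_le_tsum T (fun x _ => hnn y x)) (hM' y)
              _ = |f y| ^ p * (M' * ν y) := by ring
        _ = M' * ∑ y ∈ U, |f y| ^ p * ν y := by
            rw [Finset.mul_sum]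
            exact Finset.sum_congr rfl (fun x _ => by ring)
        _ = M' * X := by rw [hUX]
    have step4 : Z ≤ 2 ^ q * 2 * M' * X := by
      have t1 : Z ≤ ∑ z ∈ P,
          (2:ℝ) ^ q * (μ z.1 z.2 * |f z.1| ^ p + μ z.1 z.2 * |f z.2| ^ p) := by
        rw [hZdef]
        refine Finset.sum_le_sum (fun z _ => ?_)
        have hb := add_rpow_le_two_rpow hq0.le
          (Real.rpow_nonneg (abs_nonneg (f z.1)) (p-1))
          (Real.rpow_nonneg (abs_nonneg (f z.2)) (p-1))
        have hrwq : ∀ u : ℝ, (|u| ^ (p-1)) ^ q = |u| ^ p := fun u => by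
          rw [← Real.rpow_mul (abs_nonneg u), hpq']
        rw [hrwq (f z.1), hrwq (f z.2)] at hb
        calc μ z.1 z.2 * (|f z.1| ^ (p-1) + |f z.2| ^ (p-1)) ^ q
            ≤ μ z.1 z.2 * (2 ^ q * (|f z.1| ^ p + |f z.2| ^ p)) :=
              mul_le_mul_of_nonneg_left hb (hnn _ _)
          _ = 2 ^ q * (μ z.1 z.2 * |f z.1| ^ p + μ z.1 z.2 * |f z.2| ^ p) := by ring
      have t2 : ∑ z ∈ P,
          (2:ℝ) ^ q * (μ z.1 z.2 * |f z.1| ^ p + μ z.1 z.2 * |f z.2| ^ p)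
          = 2 ^ q * (∑ z ∈ P, μ z.1 z.2 * |f z.1| ^ p
            + ∑ z ∈ P, μ z.1 z.2 * |f z.2| ^ p) := by
        rw [← Finset.sum_add_distrib, Finset.mul_sum]
      have h2q : (0:ℝ) ≤ 2 ^ q := by positivity
      calc Z ≤ _ := t1
        _ = 2 ^ q * (∑ z ∈ P, μ z.1 z.2 * |f z.1| ^ p
            + ∑ z ∈ P, μ z.1 z.2 * |f z.2| ^ p) := t2
        _ ≤ 2 ^ q * (M' * X + M' * X) := by nlinarith [hZ1, hZ2]
        _ = 2 ^ q * 2 * M' * X := by ring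
    -- combine
    rw [EX, EY]
    by_cases hXz : X = 0
    · rw [hXz, Real.zero_rpow (by positivity : (1:ℝ)/p ≠ 0)]
      exact mul_nonneg (by positivity)
        (Real.rpow_nonneg (by linarith : (0:ℝ) ≤ 1/2 * Y) _)
    · have hXpos : 0 < X := lt_of_le_of_ne hX0 (Ne.symm hXz)
      have hXq : 0 < X ^ (1/q) := Real.rpow_pos_of_pos hXpos _
      have hZq : Z ^ (1/q) ≤ K * X ^ (1/q) := by
        calc Z ^ (1/q) ≤ (2 ^ q * 2 * M' * X) ^ (1/q) :=
              Real.rpow_le_rpow hZ0 step4 (by positivity)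
          _ = K * X ^ (1/q) := by
              rw [hKdef, ← Real.mul_rpow (by positivity) hX0]
      have chain : h * X ≤ 1/2 * (p * (Y ^ (1/p) * (K * X ^ (1/q)))) := by
        have c3 : p * W2 ≤ p * (Y ^ (1/p) * Z ^ (1/q)) :=
          mul_le_mul_of_nonneg_left hold hp0.le
        have c4 : Y ^ (1/p) * Z ^ (1/q) ≤ Y ^ (1/p) * (K * X ^ (1/q)) :=
          mul_le_mul_of_nonneg_left hZq (Real.rpow_nonneg hY0 _)
        have c5 : p * (Y ^ (1/p) * Z ^ (1/q)) ≤ p * (Y ^ (1/p) * (K * X ^ (1/q))) :=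
          mul_le_mul_of_nonneg_left c4 hp0.le
        linarith
      have hXsplit : X = X ^ (1/p) * X ^ (1/q) := by
        rw [← Real.rpow_add hXpos, hinv, Real.rpow_one]
      have hcancel : h * X ^ (1/p) ≤ 1/2 * (p * K * Y ^ (1/p)) := by
        refine le_of_mul_le_mul_right ?_ hXq
        calc h * X ^ (1/p) * X ^ (1/q) = h * X := by rw [mul_assoc, ← hXsplit]
          _ ≤ 1/2 * (p * (Y ^ (1/p) * (K * X ^ (1/q)))) := chain
          _ = 1/2 * (p * K * Y ^ (1/p)) * X ^ (1/q) := by ring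
      have hhalf : ((1:ℝ)/2 * Y) ^ (1/p) = ((1:ℝ)/2) ^ (1/p) * Y ^ (1/p) :=
        Real.mul_rpow (by norm_num) hY0
      rw [hhalf]
      have h2half : (2:ℝ) ^ ((1:ℝ)/p) * ((1:ℝ)/2) ^ ((1:ℝ)/p) = 1 := by
        rw [← Real.mul_rpow (by norm_num) (by norm_num)]
        norm_num
      have hRHS : p * K / (2*h) * 2 ^ (1/p) * (((1:ℝ)/2) ^ (1/p) * Y ^ (1/p))
          = p * K / (2*h) * Y ^ (1/p) := by
        calc p * K / (2*h) * 2 ^ (1/p) * (((1:ℝ)/2) ^ (1/p) * Y ^ (1/p))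
            = p * K / (2*h) * Y ^ (1/p) * (2 ^ ((1:ℝ)/p) * ((1:ℝ)/2) ^ ((1:ℝ)/p)) := by
              ring
          _ = p * K / (2*h) * Y ^ (1/p) := by rw [h2half, mul_one]
      rw [hRHS, div_mul_eq_mul_div, le_div_iff₀ (by positivity : (0:ℝ) < 2*h)]
      linarith
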